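/- Suppose there are n ≥ 2 experts, T ≥ log n rounds, ν ∈ [0,1], and η = √(log n / T). Let (Z^(t)_i) for t ∈ {1,…,T}, i ∈ {1,…,n} be independent centered Gaussian random variables of variance ν², and for each t let m^(t) be a measurable function of Z^(1),…,Z^(t−1) taking values in [−1,1]^n. Run Hedge with step size η on the noisy losses m̂^(t) = m^(t) + Z^(t), producing distributions p^(1),…,p^(T). Then for every expert i, E[Σ_{t=1}^T ⟨m^(t), p^(t)⟩] ≤ E[Σ_{t=1}^T m^(t)_i] + 4·√(T·log n). -/

import Mathlib

open scoped Classical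
open MeasureTheory ProbabilityTheory

/-- Hedge weights with step size `η` on loss sequence `loss`:
`w⁽⁰⁾ᵢ = 1`, `w⁽ᵗ⁺¹⁾ᵢ = w⁽ᵗ⁾ᵢ · exp (−η · lossᵗᵢ)`. -/
noncomputable def hedgeW {n : ℕ} (η : ℝ) (loss : ℕ → Fin n → ℝ) : ℕ → Fin n → ℝ
  | 0 => fun _ => 1
  | t + 1 => fun i => hedgeW η loss t i * Real.exp (-η * loss t i)

/-- The distribution played by Hedge in round `t`. -/
noncomputable def hedgeP {n : ℕ} (η : ℝ) (loss : ℕ → Fin n → ℝ) (t : ℕ) (i : Fin n) : ℝ :=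
  hedgeW η loss t i / ∑ j, hedgeW η loss t j


open scoped ENNReal NNReal

namespace HedgeAux

variable {n : ℕ}

lemma hedgeW_pos {η : ℝ} {loss : ℕ → Fin n → ℝ} : ∀ t i, 0 < hedgeW η loss t i
  | 0, _ => one_pos
  | (t+1), i => mul_pos (hedgeW_pos t i) (Real.exp_pos _)

lemma sumW_pos (hn : 0 < n) (η : ℝ) (loss : ℕ → Fin n → ℝ) (t : ℕ) :
    0 < ∑ j, hedgeW η loss t j := by
  have : Nonempty (Fin n) := Fin.pos_iff_nonempty.mp hn
  exact Finset.sum_pos (fun j _ => hedgeW_pos _ _) Finset.univ_nonempty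

lemma hedgeP_pos (hn : 0 < n) {η : ℝ} {loss : ℕ → Fin n → ℝ} (t : ℕ) (j : Fin n) :
    0 < hedgeP η loss t j :=
  div_pos (hedgeW_pos _ _) (sumW_pos hn η loss t)

lemma sum_hedgeP (hn : 0 < n) (η : ℝ) (loss : ℕ → Fin n → ℝ) (t : ℕ) :
    ∑ j, hedgeP η loss t j = 1 := by
  unfold hedgeP
  rw [← Finset.sum_div, div_self (sumW_pos hn η loss t).ne']

lemma hedgeW_congr {η : ℝ} {loss loss' : ℕ → Fin n → ℝ} :
    ∀ t, (∀ s, s < t → loss s = loss' s) → hedgeW η loss t = hedgeW η loss' t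
  | 0, _ => rfl
  | (t+1), h => by
      funext i
      show hedgeW η loss t i * Real.exp (-η * loss t i)
        = hedgeW η loss' t i * Real.exp (-η * loss' t i)
      rw [hedgeW_congr t (fun s hs => h s (hs.trans (Nat.lt_succ_self t))),
        h t (Nat.lt_succ_self t)]

lemma hedgeP_congr {η : ℝ} {loss loss' : ℕ → Fin n → ℝ} (t : ℕ)
    (h : ∀ s, s < t → loss s = loss' s) : hedgeP η loss t = hedgeP η loss' t := by
  funext j
  unfold hedgeP
  rw [hedgeW_congr t h]

lemma hedgeW_eq_exp (η : ℝ) (loss : ℕ → Fin n → ℝ) (i : Fin n) :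
    ∀ t, hedgeW η loss t i = Real.exp (∑ s ∈ Finset.range t, (-η * loss s i))
  | 0 => by simp [hedgeW]
  | (t+1) => by
      show hedgeW η loss t i * Real.exp (-η * loss t i) = _
      rw [hedgeW_eq_exp η loss i t, Finset.sum_range_succ, Real.exp_add]


lemma log_sumW (hn : 0 < n) (η : ℝ) (loss : ℕ → Fin n → ℝ) :
    ∀ k : ℕ, Real.log (∑ j, hedgeW η loss k j)
      = Real.log n + ∑ s ∈ Finset.range k,
          Real.log (∑ j, hedgeP η loss s j * Real.exp (-η * loss s j))
  | 0 => by simp [hedgeW]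
  | (k+1) => by
      have hS : (0:ℝ) < ∑ j, hedgeW η loss k j := sumW_pos hn η loss k
      have hP : (0:ℝ) < ∑ j, hedgeP η loss k j * Real.exp (-η * loss k j) :=
        Finset.sum_pos (fun j _ => mul_pos (hedgeP_pos hn k j) (Real.exp_pos _))
          (by have : Nonempty (Fin n) := Fin.pos_iff_nonempty.mp hn
              exact Finset.univ_nonempty)
      have h1 : ∑ j, hedgeW η loss (k+1) j
          = (∑ j, hedgeW η loss k j)
            * (∑ j, hedgeP η loss k j * Real.exp (-η * loss k j)) := by
        rw [Finset.mul_sum]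
        refine Finset.sum_congr rfl fun j _ => ?_
        show hedgeW η loss k j * Real.exp (-η * loss k j) = _
        unfold hedgeP
        field_simp
      rw [h1, Real.log_mul hS.ne' hP.ne', log_sumW hn η loss k, Finset.sum_range_succ]
      ring

lemma neg_sum_le_log_sumW (hn : 0 < n) (η : ℝ) (loss : ℕ → Fin n → ℝ) (k : ℕ) (i : Fin n) :
    ∑ s ∈ Finset.range k, (-η * loss s i) ≤ Real.log (∑ j, hedgeW η loss k j) := by
  have h1 : hedgeW η loss k i = Real.exp (∑ s ∈ Finset.range k, (-η * loss s i)) :=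
    hedgeW_eq_exp η loss i k
  calc ∑ s ∈ Finset.range k, (-η * loss s i)
      = Real.log (hedgeW η loss k i) := by rw [h1, Real.log_exp]
    _ ≤ _ := Real.log_le_log (hedgeW_pos _ _)
        (Finset.single_le_sum (fun j _ => (hedgeW_pos (η := η) (loss := loss) k j).le)
          (Finset.mem_univ i))

lemma sum_mul_exp_pos (hn : 0 < n) {q a : Fin n → ℝ} (hq0 : ∀ j, 0 ≤ q j)
    (hq1 : ∑ j, q j = 1) : 0 < ∑ j, q j * Real.exp (a j) := by
  obtain ⟨j, hj⟩ : ∃ j, 0 < q j := by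
    by_contra h
    push_neg at h
    have : (∑ j, q j) ≤ 0 := Finset.sum_nonpos (fun j _ => h j)
    rw [hq1] at this; linarith
  calc (0:ℝ) < q j * Real.exp (a j) := mul_pos hj (Real.exp_pos _)
    _ ≤ _ := Finset.single_le_sum
        (fun k _ => mul_nonneg (hq0 k) (Real.exp_pos _).le) (Finset.mem_univ j)

lemma abs_log_sum_exp_le (hn : 0 < n) {q a : Fin n → ℝ} (hq0 : ∀ j, 0 ≤ q j)
    (hq1 : ∑ j, q j = 1) :
    |Real.log (∑ j, q j * Real.exp (a j))| ≤ ∑ j, |a j| := by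
  have hA : ∀ j, |a j| ≤ ∑ k, |a k| := fun j =>
    Finset.single_le_sum (f := fun k => |a k|) (fun k _ => abs_nonneg _) (Finset.mem_univ j)
  have hpos := sum_mul_exp_pos hn hq0 hq1 (a := a)
  have hub : (∑ j, q j * Real.exp (a j)) ≤ Real.exp (∑ k, |a k|) := by
    calc ∑ j, q j * Real.exp (a j) ≤ ∑ j, q j * Real.exp (∑ k, |a k|) :=
          Finset.sum_le_sum fun j _ => mul_le_mul_of_nonneg_left
            (Real.exp_le_exp.2 ((le_abs_self _).trans (hA j))) (hq0 j)
      _ = Real.exp (∑ k, |a k|) := by rw [← Finset.sum_mul, hq1, one_mul]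
  have hlb : Real.exp (-∑ k, |a k|) ≤ ∑ j, q j * Real.exp (a j) := by
    calc Real.exp (-∑ k, |a k|) = ∑ j, q j * Real.exp (-∑ k, |a k|) := by
          rw [← Finset.sum_mul, hq1, one_mul]
      _ ≤ _ := Finset.sum_le_sum fun j _ => mul_le_mul_of_nonneg_left
          (Real.exp_le_exp.2 ((neg_le_neg (hA j)).trans (neg_abs_le _))) (hq0 j)
  rw [abs_le]
  constructor
  · have := Real.log_le_log (Real.exp_pos _) hlb
    rwa [Real.log_exp] at this
  · have := Real.log_le_log hpos hub
    rwa [Real.log_exp] at this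

lemma exp_neg_le_quad {x : ℝ} (hx : |x| ≤ 1) : Real.exp (-x) ≤ 1 - x + x^2 := by
  have h := Real.exp_bound (x := -x) (by rwa [abs_neg]) (n := 2) (by norm_num)
  have h2 : (∑ m ∈ Finset.range 2, (-x) ^ m / m.factorial) = 1 - x := by
    simp [Finset.sum_range_succ]
    ring
  rw [h2, abs_neg] at h
  have h3 := (abs_le.1 h).2
  have h4 : |x|^2 = x^2 := sq_abs x
  rw [h4] at h3
  norm_num at h3
  nlinarith [sq_nonneg x]

lemma log_sum_exp_le {η : ℝ} (hn : 0 < n) (hη0 : 0 ≤ η) (hη1 : η ≤ 1) {q c : Fin n → ℝ}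
    (hq0 : ∀ j, 0 ≤ q j) (hq1 : ∑ j, q j = 1) (hc : ∀ j, |c j| ≤ 1) :
    Real.log (∑ j, q j * Real.exp (-η * c j)) ≤ η^2 - η * ∑ j, q j * c j := by
  have hpos : 0 < ∑ j, q j * Real.exp (-η * c j) := by
    have := sum_mul_exp_pos hn hq0 hq1 (a := fun j => -η * c j)
    exact this
  have h1 : ∑ j, q j * Real.exp (-η * c j) ≤ 1 - η * (∑ j, q j * c j) + η^2 := by
    have step : ∀ j, q j * Real.exp (-η * c j)
        ≤ q j * (1 - η * c j + (η * c j)^2) := fun j => by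
      refine mul_le_mul_of_nonneg_left ?_ (hq0 j)
      have hxc : |η * c j| ≤ 1 := by
        rw [abs_mul, abs_of_nonneg hη0]
        calc η * |c j| ≤ 1 * 1 := mul_le_mul hη1 (hc j) (abs_nonneg _) zero_le_one
          _ = 1 := one_mul 1
      have := exp_neg_le_quad hxc
      rwa [neg_mul] 
    calc ∑ j, q j * Real.exp (-η * c j) ≤ ∑ j, q j * (1 - η * c j + (η * c j)^2) :=
          Finset.sum_le_sum fun j _ => step j
      _ = ∑ j, q j - η * ∑ j, q j * c j + η^2 * ∑ j, q j * (c j)^2 := by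
          rw [Finset.mul_sum, Finset.mul_sum, ← Finset.sum_sub_distrib, ← Finset.sum_add_distrib]
          exact Finset.sum_congr rfl fun j _ => by ring
      _ ≤ 1 - η * ∑ j, q j * c j + η^2 * 1 := by
          rw [hq1]
          have : ∑ j, q j * (c j)^2 ≤ ∑ j, q j * 1 := Finset.sum_le_sum fun j _ =>
            mul_le_mul_of_nonneg_left (by
              have := hc j
              nlinarith [sq_abs (c j), abs_nonneg (c j)]) (hq0 j)
          simp only [mul_one] at this
          nlinarith [sq_nonneg η]
      _ = 1 - η * ∑ j, q j * c j + η^2 := by ring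
  calc Real.log (∑ j, q j * Real.exp (-η * c j))
      ≤ Real.log (1 - η * (∑ j, q j * c j) + η^2) := Real.log_le_log hpos h1
    _ ≤ (1 - η * (∑ j, q j * c j) + η^2) - 1 :=
        Real.log_le_sub_one_of_pos (hpos.trans_le h1)
    _ = η^2 - η * ∑ j, q j * c j := by ring

lemma log_le_log_add {u A : ℝ} (hu : 0 < u) (hA : 0 < A) :
    Real.log u ≤ Real.log A + (u / A - 1) := by
  have h := Real.log_le_sub_one_of_pos (div_pos hu hA)
  rw [Real.log_div hu.ne' hA.ne'] at h
  linarith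

lemma measurable_hedgeW {α : Type*} [MeasurableSpace α] {η : ℝ} {loss : α → ℕ → Fin n → ℝ}
    (h : ∀ s j, Measurable fun a => loss a s j) :
    ∀ (k : ℕ) (j : Fin n), Measurable fun a => hedgeW η (loss a) k j
  | 0, _ => measurable_const
  | (k+1), j => by
      show Measurable fun a => hedgeW η (loss a) k j * Real.exp (-η * loss a k j)
      exact (measurable_hedgeW h k j).mul (((h k j).const_mul (-η)).exp)

lemma measurable_hedgeP {α : Type*} [MeasurableSpace α] {η : ℝ} {loss : α → ℕ → Fin n → ℝ}
    (h : ∀ s j, Measurable fun a => loss a s j) (k : ℕ) (j : Fin n) :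
    Measurable fun a => hedgeP η (loss a) k j := by
  unfold hedgeP
  exact (measurable_hedgeW h k j).div
    (Finset.measurable_sum _ fun j _ => measurable_hedgeW h k j)

end HedgeAux

section
open scoped ENNReal NNReal
open Real
namespace GaussAux
open Real


lemma key_pdf (v : ℝ≥0) (hv : v ≠ 0) (s : ℝ) (x : ℝ) :
    rexp (s * x) * gaussianPDFReal 0 v x
      = rexp (s^2 * v / 2) * gaussianPDFReal (s * v) v x := by
  have hv' : (0:ℝ) < (v:ℝ) := NNReal.coe_pos.mpr (pos_iff_ne_zero.mpr hv)
  have hexp : rexp (s * x) * rexp (-(x - 0)^2/(2*(v:ℝ)))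
      = rexp (s^2*(v:ℝ)/2) * rexp (-(x - s*(v:ℝ))^2/(2*(v:ℝ))) := by
    rw [← Real.exp_add, ← Real.exp_add]
    congr 1
    field_simp
    ring
  unfold gaussianPDFReal
  linear_combination (√(2*π*(v:ℝ)))⁻¹ * hexp

lemma gauss_exp (v : ℝ≥0) (s : ℝ) :
    Integrable (fun x => rexp (s * x)) (gaussianReal 0 v) ∧
    ∫ x, rexp (s * x) ∂(gaussianReal 0 v) = rexp (s^2 * v / 2) := by
  by_cases hv : v = 0
  · subst hv
    rw [gaussianReal_zero_var]
    constructor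
    · refine (integrable_const (rexp (s * 0))).congr ?_
      rw [Filter.EventuallyEq, ae_dirac_eq]
      exact Filter.eventually_pure.2 rfl
    · rw [integral_dirac]
      norm_num
  · have hgd : gaussianReal 0 v = volume.withDensity (gaussianPDF 0 v) :=
      gaussianReal_of_var_ne_zero 0 hv
    have htoReal : ∀ x, (gaussianPDF 0 v x).toReal = gaussianPDFReal 0 v x := fun x =>
      ENNReal.toReal_ofReal (gaussianPDFReal_nonneg 0 v x)
    constructor
    · rw [hgd, integrable_withDensity_iff (measurable_gaussianPDF 0 v)
        (ae_of_all _ fun x => ENNReal.ofReal_lt_top)]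
      have : (fun x => rexp (s * x) * (gaussianPDF 0 v x).toReal)
          = fun x => rexp (s^2 * v / 2) * gaussianPDFReal (s * v) v x := by
        funext x; rw [htoReal, key_pdf v hv]
      rw [this]
      exact (integrable_gaussianPDFReal (s * v) v).const_mul _
    · rw [hgd]
      have hpdf : gaussianPDF 0 v = fun x => ((fun y => (gaussianPDFReal 0 v y).toNNReal) x : ℝ≥0∞) := rfl
      rw [hpdf, integral_withDensity_eq_integral_smul
        ((measurable_gaussianPDFReal 0 v).real_toNNReal)]
      have : (fun x => (gaussianPDFReal 0 v x).toNNReal • rexp (s * x))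
          = fun x => rexp (s^2 * v / 2) * gaussianPDFReal (s * v) v x := by
        funext x
        rw [NNReal.smul_def, smul_eq_mul, Real.coe_toNNReal _ (gaussianPDFReal_nonneg 0 v x),
          mul_comm, key_pdf v hv]
      rw [this, integral_const_mul, integral_gaussianPDFReal_eq_one (s * v) hv, mul_one]

lemma gauss_abs_integrable (v : ℝ≥0) :
    Integrable (fun x : ℝ => |x|) (gaussianReal 0 v) := by
  refine Integrable.mono' ((gauss_exp v 1).1.add (gauss_exp v (-1)).1)
    measurable_abs.aestronglyMeasurable (ae_of_all _ fun x => ?_)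
  rw [Real.norm_eq_abs, abs_abs]
  show |x| ≤ rexp (1 * x) + rexp (-1 * x)
  have h1 : |x| + 1 ≤ rexp |x| := Real.add_one_le_exp _
  have h2 : rexp |x| ≤ rexp (1 * x) + rexp (-1 * x) := by
    rcases le_total 0 x with h | h
    · rw [abs_of_nonneg h]
      have h3 : (1:ℝ) * x = x := one_mul x
      rw [h3]
      linarith [Real.exp_pos (-1 * x)]
    · rw [abs_of_nonpos h]
      have h3 : (-1:ℝ) * x = -x := by ring
      rw [h3]
      linarith [Real.exp_pos (1 * x)]
  linarith

lemma gauss_id_integrable (v : ℝ≥0) :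
    Integrable (fun x : ℝ => x) (gaussianReal 0 v) := by
  refine (gauss_abs_integrable v).mono' measurable_id.aestronglyMeasurable
    (ae_of_all _ fun x => ?_)
  rw [Real.norm_eq_abs]

lemma gauss_mean_zero (v : ℝ≥0) : ∫ x, x ∂(gaussianReal 0 v) = 0 := by
  have h1 : (fun x : ℝ => -x) = fun x : ℝ => (-1 : ℝ) * x := by funext x; ring
  have hmap : Measure.map (fun x : ℝ => -x) (gaussianReal 0 v) = gaussianReal 0 v := by
    rw [h1, gaussianReal_map_const_mul]
    norm_num
  have h2 : ∫ x, x ∂(gaussianReal 0 v) = ∫ x, -x ∂(gaussianReal 0 v) := by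
    conv_lhs => rw [← hmap]
    rw [integral_map (f := fun y : ℝ => y) measurable_neg.aemeasurable
      measurable_id.aestronglyMeasurable]
  rw [integral_neg] at h2
  linarith

end GaussAux
end


open HedgeAux GaussAux Real

lemma round_bound {Ω : Type} [MeasurableSpace Ω] (μ : Measure Ω) [IsProbabilityMeasure μ]
    {n : ℕ} (hn : 0 < n) {η : ℝ} (hη0 : 0 < η) (hη1 : η ≤ 1) {t : ℕ}
    (Zt : Fin n → Ω → ℝ)
    (X : Ω → (Fin t × Fin n) → ℝ) (hX : Measurable X)
    (G : ((Fin t × Fin n) → ℝ) → ℕ → Fin n → ℝ)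
    (hG : ∀ s j, Measurable fun x => G x s j)
    (F : ((Fin t × Fin n) → ℝ) → (Fin n → ℝ)) (hF : Measurable F)
    (hFb : ∀ ω j, |F (X ω) j| ≤ 1)
    (hZm : ∀ j, Measurable (Zt j))
    (hindep : ∀ j, IndepFun X (Zt j) μ)
    {c : ℝ} (hc : 0 ≤ c)
    (hmgf : ∀ j, Integrable (fun ω => Real.exp (-η * Zt j ω)) μ ∧
        ∫ ω, Real.exp (-η * Zt j ω) ∂μ = Real.exp c)
    (habs : ∀ j, Integrable (fun ω => |Zt j ω|) μ) :
    Integrable (fun ω => Real.log (∑ j, hedgeP η (G (X ω)) t j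
        * Real.exp (-η * (F (X ω) j + Zt j ω)))) μ ∧
    Integrable (fun ω => ∑ j, F (X ω) j * hedgeP η (G (X ω)) t j) μ ∧
    (∫ ω, Real.log (∑ j, hedgeP η (G (X ω)) t j
        * Real.exp (-η * (F (X ω) j + Zt j ω))) ∂μ)
      ≤ η^2 + c - η * ∫ ω, ∑ j, F (X ω) j * hedgeP η (G (X ω)) t j ∂μ := by
  have hNE : Nonempty (Fin n) := Fin.pos_iff_nonempty.mp hn
  set p : ((Fin t × Fin n) → ℝ) → Fin n → ℝ := fun x j => hedgeP η (G x) t j with hpdef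
  have hp_meas : ∀ j, Measurable fun x => p x j := fun j => measurable_hedgeP hG t j
  have hp0 : ∀ x j, 0 < p x j := fun x j => hedgeP_pos hn t j
  have hp1 : ∀ x, ∑ j, p x j = 1 := fun x => sum_hedgeP hn η (G x) t
  have hFj : ∀ j, Measurable fun x => F x j := fun j => (measurable_pi_apply j).comp hF
  set B : ((Fin t × Fin n) → ℝ) → ℝ := fun x => ∑ j, p x j * Real.exp (-η * F x j) with hBdef
  have hB_meas : Measurable B :=
    Finset.measurable_sum _ fun j _ => (hp_meas j).mul (((hFj j).const_mul (-η)).exp)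
  have hBpos : ∀ x, 0 < B x := fun x =>
    sum_mul_exp_pos hn (fun j => (hp0 x j).le) (hp1 x)
  set r : Fin n → ((Fin t × Fin n) → ℝ) → ℝ :=
    fun j x => p x j * Real.exp (-η * F x j) / B x with hrdef
  have hr_meas : ∀ j, Measurable (r j) := fun j =>
    ((hp_meas j).mul (((hFj j).const_mul (-η)).exp)).div hB_meas
  have hr0 : ∀ j x, 0 ≤ r j x := fun j x =>
    div_nonneg (mul_nonneg (hp0 x j).le (Real.exp_pos _).le) (hBpos x).le
  have hr1 : ∀ j x, r j x ≤ 1 := fun j x => by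
    have : r j x = p x j * Real.exp (-η * F x j) / B x := rfl
    rw [this, div_le_one (hBpos x)]
    exact Finset.single_le_sum (f := fun k => p x k * Real.exp (-η * F x k))
      (fun k _ => mul_nonneg (hp0 x k).le (Real.exp_pos _).le) (Finset.mem_univ j)
  have hrsum : ∀ x, ∑ j, r j x = 1 := fun x => by
    have : ∑ j, r j x = (∑ j, p x j * Real.exp (-η * F x j)) / B x := by
      rw [Finset.sum_div]
    rw [this, div_self (hBpos x).ne']
  set S : Ω → ℝ := fun ω => ∑ j, p (X ω) j * Real.exp (-η * (F (X ω) j + Zt j ω)) with hSdef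
  have hS_meas : Measurable S := Finset.measurable_sum _ fun j _ =>
    ((hp_meas j).comp hX).mul
      ((((((hFj j).comp hX).add (hZm j))).const_mul (-η)).exp)
  have hSpos : ∀ ω, 0 < S ω := fun ω =>
    sum_mul_exp_pos hn (fun j => (hp0 (X ω) j).le) (hp1 (X ω))
  have hkey : ∀ ω, S ω / (Real.exp c * B (X ω))
      = ∑ j, r j (X ω) * (Real.exp (-c) * Real.exp (-η * Zt j ω)) := by
    intro ω
    have hSx : S ω = ∑ j, p (X ω) j * Real.exp (-η * (F (X ω) j + Zt j ω)) := rfl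
    rw [hSx, Finset.sum_div]
    refine Finset.sum_congr rfl fun j _ => ?_
    have hrx : r j (X ω) = p (X ω) j * Real.exp (-η * F (X ω) j) / B (X ω) := rfl
    rw [show -η * (F (X ω) j + Zt j ω) = -η * F (X ω) j + -η * Zt j ω by ring,
      Real.exp_add, Real.exp_neg, hrx]
    have h1 := (hBpos (X ω)).ne'
    have h2 := Real.exp_ne_zero c
    field_simp
  have hterm_int : ∀ j, Integrable
      (fun ω => r j (X ω) * (Real.exp (-c) * Real.exp (-η * Zt j ω))) μ := fun j =>
    Integrable.bdd_mul (c := 1) (((hmgf j).1).const_mul (Real.exp (-c)))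
      ((hr_meas j).comp hX).aestronglyMeasurable
      (ae_of_all _ fun ω => by
        rw [Real.norm_eq_abs, abs_of_nonneg (hr0 j (X ω))]
        exact hr1 j (X ω))
  have hSdivA_int : Integrable (fun ω => S ω / (Real.exp c * B (X ω))) μ := by
    have heq : (fun ω => S ω / (Real.exp c * B (X ω)))
        = fun ω => ∑ j, r j (X ω) * (Real.exp (-c) * Real.exp (-η * Zt j ω)) :=
      funext hkey
    rw [heq]
    exact integrable_finset_sum _ fun j _ => hterm_int j
  have hrX_int : ∀ j, Integrable (fun ω => r j (X ω)) μ := fun j => by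
    refine Integrable.mono' (integrable_const (1:ℝ))
      ((hr_meas j).comp hX).aestronglyMeasurable (ae_of_all _ fun ω => ?_)
    rw [Real.norm_eq_abs, abs_of_nonneg (hr0 j (X ω))]
    exact hr1 j (X ω)
  have hSA_one : ∫ ω, S ω / (Real.exp c * B (X ω)) ∂μ = 1 := by
    have h1 : ∫ ω, S ω / (Real.exp c * B (X ω)) ∂μ
        = ∑ j, ∫ ω, r j (X ω) * (Real.exp (-c) * Real.exp (-η * Zt j ω)) ∂μ := by
      rw [funext hkey]
      exact integral_finset_sum _ fun j _ => hterm_int j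
    have h2 : ∀ j, ∫ ω, r j (X ω) * (Real.exp (-c) * Real.exp (-η * Zt j ω)) ∂μ
        = ∫ ω, r j (X ω) ∂μ := by
      intro j
      have hφ : Measurable fun y : ℝ => Real.exp (-c) * Real.exp (-η * y) :=
        ((measurable_id.const_mul (-η)).exp).const_mul _
      have hIF : IndepFun (fun ω => r j (X ω))
          (fun ω => Real.exp (-c) * Real.exp (-η * Zt j ω)) μ :=
        (hindep j).comp (hr_meas j) hφ
      have hformat : (fun ω => r j (X ω) * (Real.exp (-c) * Real.exp (-η * Zt j ω)))
          = (fun ω => r j (X ω)) * (fun ω => Real.exp (-c) * Real.exp (-η * Zt j ω)) := rfl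
      rw [hformat, hIF.integral_mul_eq_mul_integral (hrX_int j).aestronglyMeasurable
        (((hmgf j).1).const_mul (Real.exp (-c))).aestronglyMeasurable]
      have h3 : ∫ ω, Real.exp (-c) * Real.exp (-η * Zt j ω) ∂μ = 1 := by
        rw [integral_const_mul, (hmgf j).2, ← Real.exp_add]
        simp
      rw [h3, mul_one]
    rw [h1, Finset.sum_congr rfl fun j _ => h2 j,
      ← integral_finset_sum _ fun j _ => hrX_int j]
    have heq1 : (fun ω => ∑ j, r j (X ω)) = fun _ => (1:ℝ) := funext fun ω => hrsum (X ω)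
    rw [heq1, integral_const]
    simp
  set g : Ω → ℝ := fun ω => ∑ j, F (X ω) j * p (X ω) j with hgdef
  have hg_meas : Measurable g := Finset.measurable_sum _ fun j _ =>
    ((hFj j).comp hX).mul ((hp_meas j).comp hX)
  have hg_bdd : ∀ ω, |g ω| ≤ 1 := fun ω => by
    have hgx : g ω = ∑ j, F (X ω) j * p (X ω) j := rfl
    rw [hgx]
    calc |∑ j, F (X ω) j * p (X ω) j| ≤ ∑ j, |F (X ω) j * p (X ω) j| :=
          Finset.abs_sum_le_sum_abs _ _
      _ ≤ ∑ j, p (X ω) j := Finset.sum_le_sum fun j _ => by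
          rw [abs_mul, abs_of_nonneg (hp0 (X ω) j).le]
          calc |F (X ω) j| * p (X ω) j ≤ 1 * p (X ω) j :=
                mul_le_mul_of_nonneg_right (hFb ω j) (hp0 (X ω) j).le
            _ = p (X ω) j := one_mul _
      _ = 1 := hp1 (X ω)
  have hg_int : Integrable g μ := by
    refine Integrable.mono' (integrable_const (1:ℝ))
      hg_meas.aestronglyMeasurable (ae_of_all _ fun ω => ?_)
    rw [Real.norm_eq_abs]
    exact hg_bdd ω
  have hlogB_le : ∀ ω, Real.log (B (X ω)) ≤ η^2 - η * g ω := fun ω => by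
    have h := log_sum_exp_le hn hη0.le hη1 (q := fun j => p (X ω) j)
      (c := fun j => F (X ω) j) (fun j => (hp0 (X ω) j).le) (hp1 (X ω)) (hFb ω)
    have hBx : B (X ω) = ∑ j, p (X ω) j * Real.exp (-η * F (X ω) j) := rfl
    have hgx : g ω = ∑ j, F (X ω) j * p (X ω) j := rfl
    rw [hBx, hgx]
    calc Real.log (∑ j, p (X ω) j * Real.exp (-η * F (X ω) j))
        ≤ η^2 - η * ∑ j, p (X ω) j * F (X ω) j := h
      _ = η^2 - η * ∑ j, F (X ω) j * p (X ω) j := by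
          rw [Finset.sum_congr rfl fun j _ => mul_comm (p (X ω) j) (F (X ω) j)]
  have hlogB_int : Integrable (fun ω => Real.log (B (X ω))) μ := by
    refine Integrable.mono' (integrable_const (n:ℝ))
      ((Real.measurable_log.comp (hB_meas.comp hX)).aestronglyMeasurable)
      (ae_of_all _ fun ω => ?_)
    rw [Real.norm_eq_abs]
    have hBx : B (X ω) = ∑ j, p (X ω) j * Real.exp (-η * F (X ω) j) := rfl
    rw [hBx]
    calc |Real.log (∑ j, p (X ω) j * Real.exp (-η * F (X ω) j))|
        ≤ ∑ j, |(-η) * F (X ω) j| :=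
          abs_log_sum_exp_le hn (fun j => (hp0 (X ω) j).le) (hp1 (X ω))
      _ ≤ ∑ _j : Fin n, (1:ℝ) := Finset.sum_le_sum fun j _ => by
          rw [abs_mul, abs_neg, abs_of_pos hη0]
          calc η * |F (X ω) j| ≤ 1 * 1 :=
                mul_le_mul hη1 (hFb ω j) (abs_nonneg _) zero_le_one
            _ = 1 := one_mul 1
      _ = (n:ℝ) := by simp
  have hpoint : ∀ ω, Real.log (S ω)
      ≤ c + Real.log (B (X ω)) + (S ω / (Real.exp c * B (X ω)) - 1) := fun ω => by
    have hApos : 0 < Real.exp c * B (X ω) := mul_pos (Real.exp_pos _) (hBpos (X ω))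
    have h := log_le_log_add (hSpos ω) hApos
    rw [Real.log_mul (Real.exp_ne_zero c) (hBpos (X ω)).ne', Real.log_exp] at h
    linarith
  have hlogS_int : Integrable (fun ω => Real.log (S ω)) μ := by
    have hmaj_int : Integrable (fun ω => ∑ _j : Fin n, (1 + |Zt _j ω|)) μ := by
      apply integrable_finset_sum
      intro j _
      exact (integrable_const 1).add (habs j)
    refine Integrable.mono' hmaj_int
      ((Real.measurable_log.comp hS_meas).aestronglyMeasurable)
      (ae_of_all _ fun ω => ?_)
    rw [Real.norm_eq_abs]
    have hSx : S ω = ∑ j, p (X ω) j * Real.exp (-η * (F (X ω) j + Zt j ω)) := rfl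
    rw [hSx]
    calc |Real.log (∑ j, p (X ω) j * Real.exp (-η * (F (X ω) j + Zt j ω)))|
        ≤ ∑ j, |(-η) * (F (X ω) j + Zt j ω)| :=
          abs_log_sum_exp_le hn (fun j => (hp0 (X ω) j).le) (hp1 (X ω))
      _ ≤ ∑ j, (1 + |Zt j ω|) := by
          refine Finset.sum_le_sum fun j _ => ?_
          rw [abs_mul, abs_neg, abs_of_pos hη0]
          calc η * |F (X ω) j + Zt j ω| ≤ 1 * |F (X ω) j + Zt j ω| :=
                mul_le_mul_of_nonneg_right hη1 (abs_nonneg _)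
            _ = |F (X ω) j + Zt j ω| := one_mul _
            _ ≤ |F (X ω) j| + |Zt j ω| := abs_add_le _ _
            _ ≤ 1 + |Zt j ω| := by linarith [hFb ω j]
  -- the main estimate
  have hmain : ∫ ω, Real.log (S ω) ∂μ ≤ η^2 + c - η * ∫ ω, g ω ∂μ := by
    have hRHS_int : Integrable
        (fun ω => c + Real.log (B (X ω)) + (S ω / (Real.exp c * B (X ω)) - 1)) μ :=
      (((integrable_const c).add hlogB_int).add (hSdivA_int.sub (integrable_const 1)))
    have h1 : ∫ ω, Real.log (S ω) ∂μ
        ≤ ∫ ω, (c + Real.log (B (X ω)) + (S ω / (Real.exp c * B (X ω)) - 1)) ∂μ :=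
      integral_mono hlogS_int hRHS_int hpoint
    have h2 : ∫ ω, (c + Real.log (B (X ω)) + (S ω / (Real.exp c * B (X ω)) - 1)) ∂μ
        = c + ∫ ω, Real.log (B (X ω)) ∂μ := by
      rw [integral_add (μ := μ) (f := fun ω => c + Real.log (B (X ω)))
          (g := fun ω => S ω / (Real.exp c * B (X ω)) - 1)
          ((integrable_const c).add hlogB_int) (hSdivA_int.sub (integrable_const 1)),
        integral_add (μ := μ) (f := fun _ => c) (g := fun ω => Real.log (B (X ω)))
          (integrable_const c) hlogB_int,
        integral_sub (μ := μ) (f := fun ω => S ω / (Real.exp c * B (X ω)))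
          (g := fun _ => (1:ℝ)) hSdivA_int (integrable_const 1),
        hSA_one, integral_const, integral_const]
      simp
    have h3 : ∫ ω, Real.log (B (X ω)) ∂μ ≤ η^2 - η * ∫ ω, g ω ∂μ := by
      have h4 : ∫ ω, Real.log (B (X ω)) ∂μ ≤ ∫ ω, (η^2 - η * g ω) ∂μ :=
        integral_mono hlogB_int ((integrable_const _).sub (hg_int.const_mul η)) hlogB_le
      rwa [integral_sub (μ := μ) (f := fun _ => η^2) (g := fun ω => η * g ω)
          (integrable_const _) (hg_int.const_mul η), integral_const,
        integral_const_mul, probReal_univ, smul_eq_mul, one_mul] at h4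
    linarith
  exact ⟨hlogS_int, hg_int, hmain⟩

/-- **Hedge with noisy losses.** With `n ≥ 2` experts, `T ≥ log n` rounds, `ν ∈ [0,1]`,
`η = √(log n / T)`, independent centered Gaussian noises `Z⁽ᵗ⁾ᵢ` of variance `ν²`, and
losses `m⁽ᵗ⁾ ∈ [−1,1]ⁿ` each a measurable function of the noises of earlier rounds,
running Hedge on the noisy losses `m̂⁽ᵗ⁾ = m⁽ᵗ⁾ + Z⁽ᵗ⁾` guarantees, for every expert `i`,
`E[Σₜ ⟨m⁽ᵗ⁾, p⁽ᵗ⁾⟩] ≤ E[Σₜ m⁽ᵗ⁾ᵢ] + 4·√(T·log n)`. -/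
theorem hedge_noisy_regret
    {Ω : Type} [MeasurableSpace Ω] (μpr : Measure Ω) [IsProbabilityMeasure μpr]
    (n T : ℕ) (hn : 2 ≤ n) (hT : Real.log n ≤ (T : ℝ))
    (ν : ℝ) (hν0 : 0 ≤ ν) (hν1 : ν ≤ 1)
    (Z : ℕ → Fin n → Ω → ℝ)
    (hZmeas : ∀ t i, Measurable (Z t i))
    (hZindep : iIndepFun
      (fun p : Fin T × Fin n => fun ω => Z p.1 p.2 ω) μpr)
    (hZdist : ∀ t < T, ∀ i,
      Measure.map (Z t i) μpr = gaussianReal 0 ⟨ν ^ 2, sq_nonneg ν⟩)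
    (m : ℕ → Ω → Fin n → ℝ)
    (hmpast : ∀ t < T, ∃ F : ((Fin t × Fin n) → ℝ) → (Fin n → ℝ),
      Measurable F ∧ ∀ ω, m t ω = F (fun p => Z (p.1 : ℕ) p.2 ω))
    (hmbdd : ∀ t < T, ∀ ω, ∀ i, |m t ω i| ≤ 1)
    (i : Fin n) :
    (∫ ω, ∑ t ∈ Finset.range T, ∑ j, m t ω j *
        hedgeP (Real.sqrt (Real.log n / T)) (fun s j => m s ω j + Z s j ω) t j ∂μpr)
      ≤ (∫ ω, ∑ t ∈ Finset.range T, m t ω i ∂μpr) + 4 * Real.sqrt (T * Real.log n) := by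
  have hn0 : 0 < n := by omega
  have hNE : Nonempty (Fin n) := Fin.pos_iff_nonempty.mp hn0
  have hn1 : (1:ℝ) < n := by exact_mod_cast hn
  have hlpos : 0 < Real.log n := Real.log_pos hn1
  have hTpos : (0:ℝ) < T := lt_of_lt_of_le hlpos hT
  set η := Real.sqrt (Real.log n / T) with hηdef
  have hη2 : η^2 = Real.log n / T := Real.sq_sqrt (by positivity)
  have hηpos : 0 < η := Real.sqrt_pos.2 (by positivity)
  have hη1 : η ≤ 1 := by
    have h1 : Real.log n / (T:ℝ) ≤ 1 := (div_le_one hTpos).2 hT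
    calc η = Real.sqrt (Real.log n / T) := hηdef
      _ ≤ Real.sqrt 1 := Real.sqrt_le_sqrt h1
      _ = 1 := Real.sqrt_one
  set v : ℝ≥0 := ⟨ν^2, sq_nonneg ν⟩ with hvdef
  set cc : ℝ := η^2 * ν^2 / 2 with hccdef
  have hcc0 : 0 ≤ cc := by rw [hccdef]; positivity
  -- measurability and integrability of m
  have hm_meas : ∀ t, t < T → ∀ j : Fin n, Measurable fun ω => m t ω j := by
    intro t ht j
    have heq : (fun ω => m t ω j)
        = fun ω => (hmpast t ht).choose (fun q : Fin t × Fin n => Z (q.1:ℕ) q.2 ω) j :=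
      funext fun ω => by rw [(hmpast t ht).choose_spec.2 ω]
    rw [heq]
    exact (measurable_pi_apply j).comp ((hmpast t ht).choose_spec.1.comp
      (measurable_pi_lambda _ fun q => hZmeas q.1 q.2))
  have hm_int : ∀ t, t < T → ∀ j : Fin n, Integrable (fun ω => m t ω j) μpr :=
    fun t ht j => Integrable.mono' (integrable_const 1)
      (hm_meas t ht j).aestronglyMeasurable
      (ae_of_all _ fun ω => by rw [Real.norm_eq_abs]; exact hmbdd t ht ω j)
  -- transfers of gaussian facts
  have hmgf : ∀ t, t < T → ∀ j : Fin n,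
      Integrable (fun ω => Real.exp (-η * Z t j ω)) μpr ∧
      ∫ ω, Real.exp (-η * Z t j ω) ∂μpr = Real.exp cc := by
    intro t ht j
    have hmap : Measure.map (Z t j) μpr = gaussianReal 0 v := hZdist t ht j
    have hexp_meas : Measurable fun x : ℝ => Real.exp (-η * x) :=
      (measurable_id.const_mul (-η)).exp
    constructor
    · have h1 := (GaussAux.gauss_exp v (-η)).1
      rw [← hmap] at h1
      exact (integrable_map_measure hexp_meas.aestronglyMeasurable
        (hZmeas t j).aemeasurable).mp h1
    · have h2 : ∫ ω, Real.exp (-η * Z t j ω) ∂μpr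
          = ∫ x, Real.exp (-η * x) ∂(Measure.map (Z t j) μpr) :=
        (integral_map (hZmeas t j).aemeasurable hexp_meas.aestronglyMeasurable).symm
      rw [h2, hmap, (GaussAux.gauss_exp v (-η)).2]

      congr 1
      have hco : ((v:ℝ≥0):ℝ) = ν^2 := rfl
      rw [hco, neg_sq, hccdef]
  have habsZ : ∀ t, t < T → ∀ j : Fin n, Integrable (fun ω => |Z t j ω|) μpr := by
    intro t ht j
    have hmap : Measure.map (Z t j) μpr = gaussianReal 0 v := hZdist t ht j
    have h1 := GaussAux.gauss_abs_integrable v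
    rw [← hmap] at h1
    exact (integrable_map_measure measurable_abs.aestronglyMeasurable
      (hZmeas t j).aemeasurable).mp h1
  have hZint : ∀ t, t < T → ∀ j : Fin n, Integrable (fun ω => Z t j ω) μpr := by
    intro t ht j
    have hmap : Measure.map (Z t j) μpr = gaussianReal 0 v := hZdist t ht j
    have h1 := GaussAux.gauss_id_integrable v
    rw [← hmap] at h1
    exact (integrable_map_measure measurable_id.aestronglyMeasurable
      (hZmeas t j).aemeasurable).mp h1
  have hZmean : ∀ t, t < T → ∀ j : Fin n, ∫ ω, Z t j ω ∂μpr = 0 := by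
    intro t ht j
    have h2 : ∫ ω, Z t j ω ∂μpr
        = ∫ x, (fun y : ℝ => y) x ∂(Measure.map (Z t j) μpr) :=
      (integral_map (hZmeas t j).aemeasurable measurable_id.aestronglyMeasurable).symm
    have hmap : Measure.map (Z t j) μpr = gaussianReal 0 v := hZdist t ht j
    rw [h2, hmap]
    exact GaussAux.gauss_mean_zero v
  -- independence of the past from round-t noise
  have hindep : ∀ t, ∀ ht : t < T, ∀ j : Fin n,
      IndepFun (fun ω (q : Fin t × Fin n) => Z (q.1:ℕ) q.2 ω) (Z t j) μpr := by
    intro t ht j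
    classical
    have hdisj : Disjoint (Finset.univ.filter (fun q : Fin T × Fin n => (q.1:ℕ) < t))
        ({((⟨t, ht⟩ : Fin T), j)} : Finset (Fin T × Fin n)) := by
      rw [Finset.disjoint_right]
      intro q hq2 hq1
      rw [Finset.mem_singleton] at hq2
      rw [Finset.mem_filter] at hq1
      subst hq2
      simp at hq1
    have base := hZindep.indepFun_finset
      (Finset.univ.filter (fun q : Fin T × Fin n => (q.1:ℕ) < t))
      ({((⟨t, ht⟩ : Fin T), j)} : Finset (Fin T × Fin n)) hdisj
      (fun q => hZmeas q.1 q.2)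
    have comp := base.comp
      (φ := fun (x : {q : Fin T × Fin n //
          q ∈ Finset.univ.filter (fun q : Fin T × Fin n => (q.1:ℕ) < t)} → ℝ)
          (q : Fin t × Fin n) =>
        x ⟨(⟨(q.1:ℕ), lt_trans q.1.2 ht⟩, q.2),
          Finset.mem_filter.mpr ⟨Finset.mem_univ _, q.1.2⟩⟩)
      (ψ := fun (y : {q : Fin T × Fin n //
          q ∈ ({((⟨t, ht⟩ : Fin T), j)} : Finset (Fin T × Fin n))} → ℝ) =>
        y ⟨((⟨t, ht⟩ : Fin T), j), Finset.mem_singleton_self _⟩)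
      (measurable_pi_lambda _ fun q => measurable_pi_apply _) (measurable_pi_apply (X := fun _ => ℝ) _)
    exact comp
  -- the per-round bound in statement form
  have round : ∀ t, ∀ ht : t < T,
      Integrable (fun ω => Real.log (∑ j, hedgeP η (fun s k => m s ω k + Z s k ω) t j
        * Real.exp (-η * (m t ω j + Z t j ω)))) μpr ∧
      Integrable (fun ω => ∑ j, m t ω j
        * hedgeP η (fun s k => m s ω k + Z s k ω) t j) μpr ∧
      ∫ ω, Real.log (∑ j, hedgeP η (fun s k => m s ω k + Z s k ω) t j
          * Real.exp (-η * (m t ω j + Z t j ω))) ∂μpr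
        ≤ η^2 + cc - η * ∫ ω, ∑ j, m t ω j
            * hedgeP η (fun s k => m s ω k + Z s k ω) t j ∂μpr := by
    intro t ht
    set X : Ω → (Fin t × Fin n) → ℝ := fun ω q => Z (q.1:ℕ) q.2 ω with hXdef
    have hXm : Measurable X := measurable_pi_lambda _ fun q => hZmeas q.1 q.2
    have hFmeas := (hmpast t ht).choose_spec.1
    have hFrep : ∀ ω, m t ω = (hmpast t ht).choose (X ω) := fun ω =>
      (hmpast t ht).choose_spec.2 ω
    set F := (hmpast t ht).choose with hFdef
    set G : ((Fin t × Fin n) → ℝ) → ℕ → Fin n → ℝ := fun x s k =>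
      if h : s < t then (hmpast s (h.trans ht)).choose
          (fun q : Fin s × Fin n => x (⟨(q.1:ℕ), lt_trans q.1.2 h⟩, q.2)) k
          + x (⟨s, h⟩, k)
      else 0 with hGdef
    have hGmeas : ∀ s k, Measurable fun x => G x s k := by
      intro s k
      by_cases h : s < t
      · simp only [hGdef, dif_pos h]
        exact ((measurable_pi_apply k).comp ((hmpast s (h.trans ht)).choose_spec.1.comp
          (measurable_pi_lambda _ fun q => measurable_pi_apply _))).add
          (measurable_pi_apply _)
      · simp only [hGdef, dif_neg h]
        exact measurable_const
    have hGL : ∀ ω, hedgeP η (fun s k => m s ω k + Z s k ω) t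
        = hedgeP η (G (X ω)) t := by
      intro ω
      apply HedgeAux.hedgeP_congr
      intro s hs
      funext k
      simp only [hGdef, dif_pos hs]
      rw [(hmpast s (hs.trans ht)).choose_spec.2 ω]
    have hFb : ∀ ω j, |F (X ω) j| ≤ 1 := fun ω j => by
      rw [← hFrep ω]; exact hmbdd t ht ω j
    obtain ⟨hI1, hI2, hI3⟩ := round_bound μpr hn0 hηpos hη1 (Z t) X hXm G hGmeas
      F hFmeas hFb (fun j => hZmeas t j) (fun j => hindep t ht j) hcc0
      (fun j => hmgf t ht j) (fun j => habsZ t ht j)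
    have hgeq : (fun ω => ∑ j, m t ω j * hedgeP η (fun s k => m s ω k + Z s k ω) t j)
        = fun ω => ∑ j, F (X ω) j * hedgeP η (G (X ω)) t j := by
      funext ω
      rw [hGL ω, hFrep ω]
    have hSeq : (fun ω => Real.log (∑ j, hedgeP η (fun s k => m s ω k + Z s k ω) t j
          * Real.exp (-η * (m t ω j + Z t j ω))))
        = fun ω => Real.log (∑ j, hedgeP η (G (X ω)) t j
          * Real.exp (-η * (F (X ω) j + Z t j ω))) := by
      funext ω
      rw [hGL ω, hFrep ω]
    refine ⟨?_, ?_, ?_⟩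
    · rw [hSeq]; exact hI1
    · rw [hgeq]; exact hI2
    · rw [hSeq, hgeq]; exact hI3
  -- split the two sides of the goal into sums of integrals
  have hLHSeq : (∫ ω, ∑ t ∈ Finset.range T, ∑ j, m t ω j
        * hedgeP η (fun s j => m s ω j + Z s j ω) t j ∂μpr)
      = ∑ t ∈ Finset.range T, ∫ ω, ∑ j, m t ω j
        * hedgeP η (fun s j => m s ω j + Z s j ω) t j ∂μpr :=
    integral_finset_sum _ (fun t htr => (round t (Finset.mem_range.1 htr)).2.1)
  have hRHSeq : (∫ ω, ∑ t ∈ Finset.range T, m t ω i ∂μpr)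
      = ∑ t ∈ Finset.range T, ∫ ω, m t ω i ∂μpr :=
    integral_finset_sum _ (fun t htr => hm_int t (Finset.mem_range.1 htr) i)
  rw [hLHSeq, hRHSeq]
  -- pointwise telescoping inequality
  have tele : ∀ ω, ∑ s ∈ Finset.range T, (-η * (m s ω i + Z s i ω))
      ≤ Real.log n + ∑ s ∈ Finset.range T,
          Real.log (∑ j, hedgeP η (fun u k => m u ω k + Z u k ω) s j
            * Real.exp (-η * (m s ω j + Z s j ω))) := by
    intro ω
    have h1 := HedgeAux.neg_sum_le_log_sumW hn0 η (fun u k => m u ω k + Z u k ω) T i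
    have h2 := HedgeAux.log_sumW hn0 η (fun u k => m u ω k + Z u k ω) T
    rw [h2] at h1
    exact h1
  -- integrate it
  have hint1 : Integrable (fun ω => ∑ s ∈ Finset.range T,
      (-η * (m s ω i + Z s i ω))) μpr :=
    integrable_finset_sum _ fun s hs =>
      (((hm_int s (Finset.mem_range.1 hs) i).add
        (hZint s (Finset.mem_range.1 hs) i)).const_mul (-η))
  have hint2 : Integrable (fun ω => Real.log n + ∑ s ∈ Finset.range T,
      Real.log (∑ j, hedgeP η (fun u k => m u ω k + Z u k ω) s j
        * Real.exp (-η * (m s ω j + Z s j ω)))) μpr :=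
    (integrable_const _).add (integrable_finset_sum _ fun s hs =>
      (round s (Finset.mem_range.1 hs)).1)
  have hIT : ∫ ω, (∑ s ∈ Finset.range T, (-η * (m s ω i + Z s i ω))) ∂μpr
      ≤ ∫ ω, (Real.log n + ∑ s ∈ Finset.range T,
          Real.log (∑ j, hedgeP η (fun u k => m u ω k + Z u k ω) s j
            * Real.exp (-η * (m s ω j + Z s j ω)))) ∂μpr :=
    integral_mono hint1 hint2 tele
  -- compute both sides of hIT
  have hITL : ∫ ω, (∑ s ∈ Finset.range T, (-η * (m s ω i + Z s i ω))) ∂μpr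
      = ∑ s ∈ Finset.range T, (-η) * ∫ ω, m s ω i ∂μpr := by
    have hint3 : ∀ s ∈ Finset.range T,
        Integrable (fun ω => -η * (m s ω i + Z s i ω)) μpr := fun s hs =>
      (((hm_int s (Finset.mem_range.1 hs) i).add
        (hZint s (Finset.mem_range.1 hs) i)).const_mul (-η))
    rw [integral_finset_sum _ hint3]
    refine Finset.sum_congr rfl fun s hs => ?_
    have hs' := Finset.mem_range.1 hs
    rw [integral_const_mul, integral_add (hm_int s hs' i) (hZint s hs' i),
      hZmean s hs' i, add_zero]
  have hITR : ∫ ω, (Real.log n + ∑ s ∈ Finset.range T,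
        Real.log (∑ j, hedgeP η (fun u k => m u ω k + Z u k ω) s j
          * Real.exp (-η * (m s ω j + Z s j ω)))) ∂μpr
      = Real.log n + ∑ s ∈ Finset.range T,
        ∫ ω, Real.log (∑ j, hedgeP η (fun u k => m u ω k + Z u k ω) s j
          * Real.exp (-η * (m s ω j + Z s j ω))) ∂μpr := by
    rw [integral_add (integrable_const _) (integrable_finset_sum _ fun s hs =>
        (round s (Finset.mem_range.1 hs)).1), integral_const,
      integral_finset_sum _ (fun s hs => (round s (Finset.mem_range.1 hs)).1)]
    simp
  rw [hITL, hITR] at hIT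
  -- combine with round bounds
  have hsum_round : ∑ s ∈ Finset.range T,
      ∫ ω, Real.log (∑ j, hedgeP η (fun u k => m u ω k + Z u k ω) s j
        * Real.exp (-η * (m s ω j + Z s j ω))) ∂μpr
      ≤ ∑ s ∈ Finset.range T, (η^2 + cc - η * ∫ ω, ∑ j, m s ω j
        * hedgeP η (fun u k => m u ω k + Z u k ω) s j ∂μpr) :=
    Finset.sum_le_sum fun s hs => (round s (Finset.mem_range.1 hs)).2.2
  -- abbreviations
  set A := ∑ t ∈ Finset.range T, ∫ ω, ∑ j, m t ω j
    * hedgeP η (fun s j => m s ω j + Z s j ω) t j ∂μpr with hAdef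
  set M := ∑ t ∈ Finset.range T, ∫ ω, m t ω i ∂μpr with hMdef
  have hsum1 : ∑ s ∈ Finset.range T, (-η) * ∫ ω, m s ω i ∂μpr = -η * M := by
    rw [hMdef, Finset.mul_sum]
  have hsum2 : ∑ s ∈ Finset.range T, (η^2 + cc - η * ∫ ω, ∑ j, m s ω j
      * hedgeP η (fun u k => m u ω k + Z u k ω) s j ∂μpr)
      = T * (η^2 + cc) - η * A := by
    rw [Finset.sum_sub_distrib, Finset.sum_const, Finset.card_range, hAdef,
      Finset.mul_sum]
    simp only [nsmul_eq_mul]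
    try ring
  have hmain : -η * M ≤ Real.log n + (T * (η^2 + cc) - η * A) := by
    calc -η * M = ∑ s ∈ Finset.range T, (-η) * ∫ ω, m s ω i ∂μpr := hsum1.symm
      _ ≤ Real.log n + ∑ s ∈ Finset.range T,
          ∫ ω, Real.log (∑ j, hedgeP η (fun u k => m u ω k + Z u k ω) s j
            * Real.exp (-η * (m s ω j + Z s j ω))) ∂μpr := hIT
      _ ≤ Real.log n + (T * (η^2 + cc) - η * A) := by
          rw [← hsum2]
          exact add_le_add_right hsum_round _
  -- numerics
  have hTeta : (T:ℝ) * η^2 = Real.log n := by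
    rw [hη2]; field_simp
  have hR : η * Real.sqrt (T * Real.log n) = Real.log n := by
    rw [hηdef, ← Real.sqrt_mul (by positivity)]
    rw [show Real.log n / T * (T * Real.log n) = (Real.log n)^2 by field_simp]
    exact Real.sqrt_sq hlpos.le
  have hR0 : 0 ≤ Real.sqrt ((T:ℝ) * Real.log n) := Real.sqrt_nonneg _
  have hTcc : (T:ℝ) * (η^2 + cc) ≤ (5/2) * Real.log n - Real.log n := by
    have hν2 : ν^2 ≤ 1 := by nlinarith
    have hccle : cc ≤ η^2 / 2 := by
      rw [hccdef]
      nlinarith [sq_nonneg η, hν2]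
    have h8 : (T:ℝ) * cc ≤ T * (η^2/2) := mul_le_mul_of_nonneg_left hccle hTpos.le
    linarith [h8, hTeta]
  have hfinal : η * A ≤ η * (M + 4 * Real.sqrt ((T:ℝ) * Real.log n)) := by
    have h7 : η * (M + 4 * Real.sqrt ((T:ℝ) * Real.log n))
        = η * M + 4 * (η * Real.sqrt ((T:ℝ) * Real.log n)) := by ring
    rw [h7, hR]
    linarith [hmain, hTcc, hlpos]
  have := le_of_mul_le_mul_left hfinal hηpos
  linarith
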